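/- Let X be a closed orientable topological manifold of dimension n with H_{r−1}(X;ℤ) a free abelian group, and let E be a real oriented vector bundle of fibre dimension r over X with non-trivial Euler class e(E) ≠ 0 ∈ H^r(X;ℤ). Then for any bundle endomorphism L : E → E which is orientation reversing over X∖Σ(L) (i.e. the pullback j*L : j*E → j*E over j : X∖Σ(L) ↪ X reverses the orientation), the covering dimension of Σ(L) is at least n − r. -/

import Mathlib

set_option autoImplicit false

noncomputable section

open Bundle Set Module

/-- `HasCovDimLE Y m` : every finite open cover of `Y` has a finite open refinement in which
no point is included in more than `m + 1` elements. -/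
def HasCovDimLE (Y : Type) [TopologicalSpace Y] (m : ℕ) : Prop :=
  ∀ U : Finset (Set Y), (∀ u ∈ U, IsOpen u) → ⋃₀ (U : Set (Set Y)) = Set.univ →
    ∃ V : Finset (Set Y), (∀ v ∈ V, IsOpen v) ∧ ⋃₀ (V : Set (Set Y)) = Set.univ ∧
      (∀ v ∈ V, ∃ u ∈ U, v ⊆ u) ∧
      ∀ y : Y, {v ∈ (V : Set (Set Y)) | y ∈ v}.ncard ≤ m + 1

/-- The covering dimension of a topological space, as an element of `ℕ∞` (`⊤` if no finite
`m` works). -/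
def covDim (Y : Type) [TopologicalSpace Y] : ℕ∞ :=
  sInf {d : ℕ∞ | ∃ m : ℕ, d = (m : ℕ∞) ∧ HasCovDimLE Y m}

/-- The underlying graded groups of: relative singular homology `H_k(Y, A; R)` (with
`H_k(Y; R) = H_k(Y, ∅; R)`), singular cohomology `H^k(Y; G)`, Čech cohomology `Ȟ^k(Y; R)`
and the `Ext`-term `Ext¹_R(H_{k-1}(Y; R), G)` of the universal coefficient theorem. -/
structure CohomologyData (R : Type) [CommRing R] (G : Type) [AddCommGroup G] [Module R G] where
  /-- relative singular homology `H_k(Y, A; R)` -/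
  Hrel : ∀ (Y : Type) [TopologicalSpace Y], Set Y → ℤ → Type
  instHrelAdd : ∀ (Y : Type) [TopologicalSpace Y] (A : Set Y) (k : ℤ), AddCommGroup (Hrel Y A k)
  instHrelMod : ∀ (Y : Type) [TopologicalSpace Y] (A : Set Y) (k : ℤ), Module R (Hrel Y A k)
  /-- singular cohomology `H^k(Y; G)` -/
  Hco : ∀ (Y : Type) [TopologicalSpace Y], ℤ → Type
  instHcoAdd : ∀ (Y : Type) [TopologicalSpace Y] (k : ℤ), AddCommGroup (Hco Y k)
  /-- Čech cohomology `Ȟ^k(Y; R)` -/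
  Hcech : ∀ (Y : Type) [TopologicalSpace Y], ℤ → Type
  instHcechAdd : ∀ (Y : Type) [TopologicalSpace Y] (k : ℤ), AddCommGroup (Hcech Y k)
  /-- the group `Ext¹_R(H_{k-1}(Y; R), G)` appearing in the universal coefficient theorem -/
  ExtUCT : ∀ (Y : Type) [TopologicalSpace Y], ℤ → Type
  instExtAdd : ∀ (Y : Type) [TopologicalSpace Y] (k : ℤ), AddCommGroup (ExtUCT Y k)

attribute [instance] CohomologyData.instHrelAdd CohomologyData.instHrelMod
  CohomologyData.instHcoAdd CohomologyData.instHcechAdd CohomologyData.instExtAdd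

/-- An axiomatization of the package consisting of singular homology of pairs (with
coefficients in a PID `R`), singular cohomology (with coefficients in an `R`-module `G`) and
Čech cohomology (with coefficients in `R`), together with: functoriality, the Kronecker
pairing `α` (written `pair`, `α^k(η)(ξ) = ⟨η, ξ⟩`) and its naturality, the universal
coefficient exact sequence
`0 → Ext¹_R(H_{k-1}(Y;R), G) →^{β^k} H^k(Y;G) →^{α^k} Hom_R(H_k(Y;R), G) → 0`
(exactness at `H^k` and vanishing of the `Ext`-term on free homology), the homology long
exact sequence of a pair (the part `im j_* = ker π_*`), and the fact that non-vanishing of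
`Ȟ^m` of a compact Hausdorff space forces its covering dimension to be at least `m`.
All of these are classical facts about the (co)homology of topological spaces; they are the
only properties used in the paper. -/
structure Theory (R : Type) [CommRing R] [IsDomain R] [IsPrincipalIdealRing R]
    (G : Type) [AddCommGroup G] [Module R G] extends CohomologyData R G where
  /-- functoriality of relative homology for maps of pairs -/
  hmap : ∀ {Y Z : Type} [TopologicalSpace Y] [TopologicalSpace Z]
    (f : C(Y, Z)) {A : Set Y} {B : Set Z}, Set.MapsTo f A B →
    ∀ k : ℤ, Hrel Y A k →ₗ[R] Hrel Z B k
  /-- contravariant functoriality of singular cohomology -/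
  cmap : ∀ {Y Z : Type} [TopologicalSpace Y] [TopologicalSpace Z]
    (f : C(Y, Z)) (k : ℤ), Hco Z k →+ Hco Y k
  cmap_id : ∀ (Y : Type) [TopologicalSpace Y] (k : ℤ) (x : Hco Y k),
    cmap (ContinuousMap.id Y) k x = x
  /-- contravariant functoriality of Čech cohomology -/
  ccmap : ∀ {Y Z : Type} [TopologicalSpace Y] [TopologicalSpace Z]
    (f : C(Y, Z)) (k : ℤ), Hcech Z k →+ Hcech Y k
  /-- the Kronecker pairing `α^k : H^k(Y;G) → Hom_R(H_k(Y;R), G)`, `α^k(η)(ξ) = ⟨η, ξ⟩` -/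
  pair : ∀ (Y : Type) [TopologicalSpace Y] (k : ℤ),
    Hco Y k →+ (Hrel Y (∅ : Set Y) k →ₗ[R] G)
  /-- naturality of the Kronecker pairing: `⟨f^*η, ξ⟩ = ⟨η, f_*ξ⟩` -/
  pair_natural : ∀ {Y Z : Type} [TopologicalSpace Y] [TopologicalSpace Z] (f : C(Y, Z)) (k : ℤ)
    (η : Hco Z k) (ξ : Hrel Y (∅ : Set Y) k),
    pair Y k (cmap f k η) ξ = pair Z k η (hmap f (Set.mapsTo_empty _ _) k ξ)
  /-- the map `β^k : Ext¹_R(H_{k-1}(Y;R), G) → H^k(Y;G)` of the universal coefficient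
  theorem -/
  betaMap : ∀ (Y : Type) [TopologicalSpace Y] (k : ℤ), ExtUCT Y k →+ Hco Y k
  /-- exactness of the universal coefficient sequence at `H^k(Y;G)`: `ker α^k = im β^k` -/
  uct_exact : ∀ (Y : Type) [TopologicalSpace Y] (k : ℤ) (x : Hco Y k),
    pair Y k x = 0 ↔ x ∈ Set.range (betaMap Y k)
  /-- `Ext¹_R(H_{k-1}(Y;R), G)` vanishes if `H_{k-1}(Y;R)` is a free `R`-module -/
  uct_free : ∀ (Y : Type) [TopologicalSpace Y] (k : ℤ),
    Module.Free R (Hrel Y (∅ : Set Y) (k - 1)) → ∀ z : ExtUCT Y k, betaMap Y k z = 0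
  /-- exactness of the long exact homology sequence of the pair `(X, X ∖ A)` at `H_k(X)`:
  `π_* ξ = 0` iff `ξ` comes from `H_k(X ∖ A)` -/
  les_exact : ∀ (X : Type) [TopologicalSpace X] (A : Set X) (k : ℤ)
    (ξ : Hrel X (∅ : Set X) k),
    hmap (ContinuousMap.id X) (Set.mapsTo_empty _ _) k ξ = (0 : Hrel X Aᶜ k) ↔
      ∃ ζ : Hrel (↥(Aᶜ)) (∅ : Set ↥(Aᶜ)) k,
        hmap (⟨Subtype.val, continuous_subtype_val⟩ : C(↥(Aᶜ), X))
          (Set.mapsTo_empty _ _) k ζ = ξ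
  /-- if the Čech cohomology `Ȟ^m(Y;R)` of a compact Hausdorff space is non-trivial
  then its covering dimension is at least `m` -/
  dim_cech : ∀ (Y : Type) [TopologicalSpace Y] [CompactSpace Y] [T2Space Y] (m : ℕ),
    (∃ x : Hcech Y (m : ℤ), x ≠ 0) → (m : ℕ∞) ≤ covDim Y

/-- `X` is `R`-orientable (with respect to the homology theory `T`) if there is a compatible
continuous choice `o(λ)` of generators of the local homology modules
`H_n(X, X ∖ {λ}; R) ≅ R`: i.e. an open cover `{U_i}` of `X` and classes
`μ_i ∈ H_n(X, X ∖ U_i; R)` restricting to `o(λ)` for every `λ ∈ U_i`. -/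
def ROrientable {R : Type} [CommRing R] [IsDomain R] [IsPrincipalIdealRing R]
    {G : Type} [AddCommGroup G] [Module R G] (T : Theory R G)
    (n : ℕ) (X : Type) [TopologicalSpace X] : Prop :=
  ∃ o : ∀ x : X, T.Hrel X ({x}ᶜ) (n : ℤ),
    (∀ x, Submodule.span R {o x} = ⊤) ∧
    ∃ (ι : Type) (U : ι → Set X), (∀ i, IsOpen (U i)) ∧ (∀ x, ∃ i, x ∈ U i) ∧
      ∃ μ : ∀ i, T.Hrel X ((U i)ᶜ) (n : ℤ),
        ∀ (i) (x) (hx : x ∈ U i),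
          T.hmap (ContinuousMap.id X)
            ((Set.mapsTo_id _).mono_right
              (Set.compl_subset_compl.mpr (Set.singleton_subset_iff.mpr hx)))
            (n : ℤ) (μ i) = o x

/-- The full package: the (co)homology theories together with Poincaré–Lefschetz duality for
closed `R`-orientable topological `n`-manifolds (in the form of [Bredon, Cor. VI.8.4]: for a
closed subset `A ⊆ X` there is a commutative square consisting of the duality isomorphisms
`Ȟ^{n-k}(X;R) ≅ H_k(X;R)` and `Ȟ^{n-k}(A;R) ≅ H_k(X, X∖A;R)`, the restriction
`i^* : Ȟ^{n-k}(X;R) → Ȟ^{n-k}(A;R)` and `π_* : H_k(X;R) → H_k(X, X∖A;R)`), and the fact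
that every closed topological manifold is `R`-orientable when `2 = 0` in `R`. -/
structure GoodTheory (R : Type) [CommRing R] [IsDomain R] [IsPrincipalIdealRing R]
    (G : Type) [AddCommGroup G] [Module R G] extends Theory R G where
  /-- Poincaré–Lefschetz duality -/
  pd : ∀ (n : ℕ) (X : Type) [TopologicalSpace X] [T2Space X]
    [ChartedSpace (EuclideanSpace ℝ (Fin n)) X] [CompactSpace X],
    ROrientable toTheory n X →
    ∀ (k : ℤ) (A : Set X), IsClosed A →
      ∃ (pdX : Hcech X ((n : ℤ) - k) ≃+ Hrel X (∅ : Set X) k)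
        (pdA : Hcech (↥A) ((n : ℤ) - k) ≃+ Hrel X Aᶜ k),
        ∀ η : Hcech X ((n : ℤ) - k),
          pdA (ccmap (⟨Subtype.val, continuous_subtype_val⟩ : C(↥A, X)) ((n : ℤ) - k) η) =
          hmap (ContinuousMap.id X) (Set.mapsTo_empty _ _) k (pdX η)
  /-- every closed topological manifold is `R`-orientable if `2 = 0` in `R` -/
  orient_two : (2 : R) = 0 → ∀ (n : ℕ) (X : Type) [TopologicalSpace X] [T2Space X]
    [ChartedSpace (EuclideanSpace ℝ (Fin n)) X] [CompactSpace X],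
    ROrientable toTheory n X

/-- A (finite rank) vector bundle over the base `Y` with scalar field `𝕜`, packaged as a
structure: a model fibre `F` and a family of fibres `E y` together with all the data making
it a topological vector bundle. -/
structure VB (𝕜 : Type) [NontriviallyNormedField 𝕜] (Y : Type) [TopologicalSpace Y] :
    Type 1 where
  /-- the model fibre -/
  F : Type
  [nF : NormedAddCommGroup F]
  [sF : NormedSpace 𝕜 F]
  [fdF : FiniteDimensional 𝕜 F]
  /-- the fibres -/
  E : Y → Type
  [aE : ∀ y, AddCommGroup (E y)]
  [mE : ∀ y, Module 𝕜 (E y)]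
  [tE : ∀ y, TopologicalSpace (E y)]
  [tT : TopologicalSpace (Bundle.TotalSpace F E)]
  [fb : FiberBundle F E]
  [vb : VectorBundle 𝕜 F E]

attribute [instance] VB.nF VB.sF VB.fdF VB.aE VB.mE VB.tE VB.tT VB.fb VB.vb

/-- A morphism of vector bundles over `X`: a fibrewise (continuous) linear map which is
continuous as a map of total spaces. -/
def IsBundleMorphism {𝕜 : Type} [NontriviallyNormedField 𝕜] {X : Type} [TopologicalSpace X]
    (V W : VB 𝕜 X) (L : ∀ x, V.E x →L[𝕜] W.E x) : Prop :=
  Continuous fun p : Bundle.TotalSpace V.F V.E =>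
    (Bundle.TotalSpace.mk p.1 (L p.1 p.2) : Bundle.TotalSpace W.F W.E)

/-- The singular set `Σ(L) = {λ ∈ X | L_λ ∉ GL(E_λ, F_λ)}` of a bundle morphism `L`:
the set of points of the base over which `L` is not a linear isomorphism of fibres. -/
def singularSet {𝕜 : Type} [NontriviallyNormedField 𝕜] {X : Type} [TopologicalSpace X]
    (V W : VB 𝕜 X) (L : ∀ x, V.E x →L[𝕜] W.E x) : Set X :=
  {x : X | ¬ Function.Bijective (L x)}

/-- `o` is an orientation of the real vector bundle `V` of rank `r`: a function assigning an
orientation to each fibre in such a way that near each point of the base the local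
trivialization carries the orientations of the fibres into one fixed orientation of the
model fibre. -/
def IsBundleOrientation {Y : Type} [TopologicalSpace Y] (r : ℕ) (V : VB ℝ Y)
    (o : ∀ y, Orientation ℝ (V.E y) (Fin r)) : Prop :=
  ∀ y₀ : Y, ∃ ω : Orientation ℝ V.F (Fin r),
    ∀ (y) (hy : y ∈ (trivializationAt V.F V.E y₀).baseSet),
      Orientation.map (Fin r)
        ((trivializationAt V.F V.E y₀).continuousLinearEquivAt ℝ y hy).toLinearEquiv
        (o y) = ω

/-- A real vector bundle is orientable if it admits an orientation. -/
def BundleOrientable {Y : Type} [TopologicalSpace Y] (V : VB ℝ Y) : Prop :=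
  ∃ o : ∀ y, Orientation ℝ (V.E y) (Fin (Module.finrank ℝ V.F)),
    IsBundleOrientation (Module.finrank ℝ V.F) V o

/-- An oriented real vector bundle of rank `r` over `Y`. -/
structure OVB (Y : Type) [TopologicalSpace Y] (r : ℕ) extends VB ℝ Y where
  /-- the fibrewise orientation -/
  ori : ∀ y, Orientation ℝ (E y) (Fin r)
  isOri : IsBundleOrientation r toVB ori

/-- A bundle morphism `L : E → F` between oriented bundles is orientation preserving if
`Σ(L) ≠ X` and its restriction over `X ∖ Σ(L)` carries the orientation of `E` to the
orientation of `F` on each fibre. -/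
def IsOrientPreservingMorphism {X : Type} [TopologicalSpace X] {r : ℕ}
    (V W : OVB X r) (L : ∀ x, V.E x →L[ℝ] W.E x) : Prop :=
  singularSet V.toVB W.toVB L ≠ Set.univ ∧
  ∀ (x) (hx : Function.Bijective (L x)),
    Orientation.map (Fin r)
      (LinearEquiv.ofBijective ((L x : V.E x →ₗ[ℝ] W.E x)) hx) (V.ori x) = W.ori x

/-- An `H^k(·;G)`-valued characteristic class for oriented (rank `r`) real bundles: it
assigns to every oriented bundle over a base `Y` a class `e(E) ∈ H^k(Y;G)`, such that
`e(E₁) = f^* e(E₂)` whenever a continuous map `f : Y → Z` is covered by an orientation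
preserving (fibrewise isomorphic, continuous) bundle map `E₁ → E₂`. -/
structure OrientedCharClass {R : Type} [CommRing R] [IsDomain R] [IsPrincipalIdealRing R]
    {G : Type} [AddCommGroup G] [Module R G] (T : GoodTheory R G) (r : ℕ) (k : ℤ) where
  /-- the value of the characteristic class on an oriented bundle -/
  cls : ∀ (Y : Type) [TopologicalSpace Y], OVB Y r → T.Hco Y k
  /-- naturality with respect to orientation preserving bundle maps covering continuous
  maps -/
  natural : ∀ (Y Z : Type) [TopologicalSpace Y] [TopologicalSpace Z]
    (V : OVB Y r) (W : OVB Z r) (f : C(Y, Z)) (φ : ∀ y, V.E y ≃ₗ[ℝ] W.E (f y)),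
    Continuous (fun p : Bundle.TotalSpace V.F V.E =>
      (Bundle.TotalSpace.mk (f p.1) (φ p.1 p.2) : Bundle.TotalSpace W.F W.E)) →
    (∀ y, Orientation.map (Fin r) (φ y) (V.ori y) = W.ori (f y)) →
    cls Y V = T.cmap f k (cls Z W)

/-! ### Auxiliary lemmas -/

section Aux

variable {Y : Type} [TopologicalSpace Y]

/-- The negation of a bundle orientation is a bundle orientation. -/
lemma isBundleOrientation_neg {r : ℕ} (V : VB ℝ Y)
    (o : ∀ y, Orientation ℝ (V.E y) (Fin r)) (h : IsBundleOrientation r V o) :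
    IsBundleOrientation r V (fun y => -(o y)) := by
  intro y₀
  obtain ⟨ω, hω⟩ := h y₀
  refine ⟨-ω, fun y hy => ?_⟩
  rw [Orientation.map_neg, hω y hy]

/-- The pullback of a vector bundle along a continuous map, as a `VB`. -/
@[reducible] noncomputable def VB.pull {X : Type} [TopologicalSpace X] (V : VB ℝ X)
    (j : C(Y, X)) : VB ℝ Y where
  F := V.F
  E := ⇑j *ᵖ V.E
  aE := fun y => V.aE (j y)
  mE := fun y => V.mE (j y)
  tE := fun y => V.tE (j y)
  tT := inferInstance
  fb := FiberBundle.pullback j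
  vb := by exact VectorBundle.pullback (F := V.F) (E := V.E) (B' := Y) ℝ j

/-- Pulling back an orientation of a bundle gives an orientation of the pullback bundle. -/
lemma isBundleOrientation_pull {X : Type} [TopologicalSpace X] (V : VB ℝ X) (j : C(Y, X))
    {r : ℕ} (o : ∀ x, Orientation ℝ (V.E x) (Fin r)) (h : IsBundleOrientation r V o) :
    IsBundleOrientation r (V.pull j) (fun y => o (j y)) := by
  intro y₀
  obtain ⟨ω, hω⟩ := h (j y₀)
  refine ⟨ω, fun y hy => ?_⟩
  have hy' : j y ∈ (trivializationAt V.F V.E (j y₀)).baseSet := hy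
  have hequiv :
      ((trivializationAt (V.pull j).F (V.pull j).E y₀).continuousLinearEquivAt ℝ y
          hy).toLinearEquiv =
        ((trivializationAt V.F V.E (j y₀)).continuousLinearEquivAt ℝ (j y)
          hy').toLinearEquiv :=
    LinearEquiv.ext fun v => rfl
  exact (congrArg (fun f => Orientation.map (Fin r) f (o (j y))) hequiv).trans (hω (j y) hy')

/-- On a finite-dimensional space, a linear endomorphism is bijective iff its determinant is
non-zero. -/
lemma det_ne_zero_iff_bijective {F : Type} [AddCommGroup F] [Module ℝ F]
    [FiniteDimensional ℝ F] (f : F →ₗ[ℝ] F) :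
    f.det ≠ 0 ↔ Function.Bijective f := by
  constructor
  · intro h
    exact (f.equivOfDetNeZero h).bijective
  · intro h hdet
    obtain ⟨x, hx, hx0⟩ := SetLike.exists_of_lt (LinearMap.bot_lt_ker_of_det_eq_zero hdet)
    exact hx0 (by simpa using h.injective (by simpa using hx : f x = f 0))

/-- The singular set of a bundle endomorphism is closed. -/
lemma isClosed_singularSet {X : Type} [TopologicalSpace X] (V : VB ℝ X)
    (L : ∀ x, V.E x →L[ℝ] V.E x) (hL : IsBundleMorphism V V L) :
    IsClosed (singularSet V V L) := by
  rw [show singularSet V V L = {x | Function.Bijective (L x)}ᶜ from rfl, isClosed_compl_iff,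
    isOpen_iff_mem_nhds]
  intro x₀ hx₀
  set t := trivializationAt V.F V.E x₀ with ht
  have hx₀U : x₀ ∈ t.baseSet := mem_baseSet_trivializationAt _ _ _
  set M : X → (V.F →L[ℝ] V.F) := fun x =>
    (t.continuousLinearMapAt ℝ x).comp ((L x).comp (t.symmL ℝ x)) with hM
  -- `M` agrees with the conjugate of `L` by the trivialization over the base set
  have hMcoe : ∀ (x) (hx : x ∈ t.baseSet),
      ⇑(M x) = (t.continuousLinearEquivAt ℝ x hx) ∘ ⇑(L x) ∘
        (t.continuousLinearEquivAt ℝ x hx).symm := by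
    intro x hx
    rw [hM]
    simp only [ContinuousLinearMap.coe_comp']
    rw [t.coe_continuousLinearEquivAt_eq hx, t.symm_continuousLinearEquivAt_eq hx]
  have hMbij : ∀ (x) (hx : x ∈ t.baseSet),
      (Function.Bijective (M x) ↔ Function.Bijective (L x)) := by
    intro x hx
    rw [hMcoe x hx,
      Function.Bijective.of_comp_iff' (t.continuousLinearEquivAt ℝ x hx).bijective,
      Function.Bijective.of_comp_iff _ (t.continuousLinearEquivAt ℝ x hx).symm.bijective]
  -- continuity of `M` on the base set
  have hMcont : ContinuousOn M t.baseSet := by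
    rw [continuousOn_clm_apply]
    intro v
    have h1 : ContinuousOn (fun x : X => (⟨x, t.symm x v⟩ : Bundle.TotalSpace V.F V.E))
        t.baseSet :=
      t.continuousOn_symm.comp
        ((continuous_id.prodMk (continuous_const : Continuous fun _ : X => v)).continuousOn)
        (fun x hx => ⟨hx, mem_univ v⟩)
    have h2 : ContinuousOn (fun x : X =>
        (⟨x, L x (t.symm x v)⟩ : Bundle.TotalSpace V.F V.E)) t.baseSet :=
      hL.comp_continuousOn h1
    have h3 : ContinuousOn (fun x : X =>
        (t (⟨x, L x (t.symm x v)⟩ : Bundle.TotalSpace V.F V.E)).2) t.baseSet := by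
      refine continuous_snd.comp_continuousOn (t.continuousOn.comp h2 ?_)
      intro x hx
      rw [Trivialization.mem_source]
      exact hx
    refine h3.congr ?_
    intro x hx
    show M x v = _
    rw [hMcoe x hx]
    simp only [Function.comp_apply, t.apply_eq_prod_continuousLinearEquivAt ℝ x hx,
      Trivialization.continuousLinearEquivAt_symm_apply]
  -- the open neighbourhood
  have hWopen : IsOpen (t.baseSet ∩ (fun x => (M x).det) ⁻¹' {(0 : ℝ)}ᶜ) :=
    (ContinuousLinearMap.continuous_det.comp_continuousOn hMcont).isOpen_inter_preimage
      t.open_baseSet isOpen_compl_singleton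
  have hx₀W : x₀ ∈ t.baseSet ∩ (fun x => (M x).det) ⁻¹' {(0 : ℝ)}ᶜ := by
    refine ⟨hx₀U, ?_⟩
    have : Function.Bijective (M x₀) := (hMbij x₀ hx₀U).2 hx₀
    simpa using (det_ne_zero_iff_bijective ((M x₀) : V.F →ₗ[ℝ] V.F)).2 this
  refine mem_nhds_iff.mpr ⟨_, ?_, hWopen, hx₀W⟩
  rintro x ⟨hxU, hxdet⟩
  exact (hMbij x hxU).1 ((det_ne_zero_iff_bijective ((M x) : V.F →ₗ[ℝ] V.F)).1 (by simpa using hxdet))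

/-- Any two `ℤ`-module structures on an abelian group agree. -/
lemma intModule_eq {M : Type} [AddCommGroup M] (i1 i2 : Module ℤ M) : i1 = i2 :=
  (AddCommGroup.uniqueIntModule.uniq i1).trans (AddCommGroup.uniqueIntModule.uniq i2).symm

/-- Freeness of a `ℤ`-module does not depend on the `ℤ`-module structure. -/
lemma free_int_transfer {M : Type} [AddCommGroup M] (i1 i2 : Module ℤ M)
    (h : @Module.Free ℤ M _ _ i1) : @Module.Free ℤ M _ _ i2 := by
  rw [intModule_eq i2 i1]
  exact h

end Aux


/-- Let `X` be a closed orientable topological manifold of dimension `n`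
with `H_{r-1}(X;ℤ)` a free abelian group, and let `E` be a real oriented vector bundle of
fibre dimension `r` over `X` with non-trivial Euler class `e(E) ≠ 0 ∈ H^r(X;ℤ)`. Then for
any bundle endomorphism `L : E → E` which is orientation reversing over `X ∖ Σ(L)`, the
covering dimension of `Σ(L)` is at least `n - r`.
(The Euler class is represented by an `H^r(·;ℤ)`-valued characteristic class `e` for
oriented rank-`r` bundles satisfying `e(-E) = -e(E)`, where `-E` denotes `E` with the
reversed orientation; these are the only properties of the Euler class used.) -/
theorem covDim_ge_of_euler
    (T : GoodTheory ℤ ℤ)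
    (n : ℕ) (X : Type) [TopologicalSpace X] [T2Space X]
    [ChartedSpace (EuclideanSpace ℝ (Fin n)) X] [CompactSpace X]
    (hor : ROrientable T.toTheory n X)
    (r : ℕ) (hfree : Module.Free ℤ (T.Hrel X (∅ : Set X) ((r : ℤ) - 1)))
    (V : OVB X r)
    (e : OrientedCharClass T r (r : ℤ))
    (hrev : ∀ h : IsBundleOrientation r V.toVB (fun x => -(V.ori x)),
      e.cls X ⟨V.toVB, fun x => -(V.ori x), h⟩ = - e.cls X V)
    (he : e.cls X V ≠ 0)
    (L : ∀ x, V.E x →L[ℝ] V.E x) (hL : IsBundleMorphism V.toVB V.toVB L)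
    (hLrev : ∀ (x) (hx : Function.Bijective (L x)),
      Orientation.map (Fin r)
        (LinearEquiv.ofBijective ((L x : V.E x →ₗ[ℝ] V.E x)) hx) (V.ori x) = -(V.ori x)) :
    ((n - r : ℕ) : ℕ∞) ≤ covDim ↥(singularSet V.toVB V.toVB L) := by
  classical
  by_cases hrn : r ≤ n
  swap
  · rw [Nat.sub_eq_zero_of_le (le_of_not_ge hrn)]
    exact_mod_cast zero_le
  -- `β = 0`, hence the Kronecker pairing is injective
  have hβ : ∀ x : T.Hco X (r : ℤ), (∀ ξ, T.pair X (r : ℤ) x ξ = 0) → x = 0 := by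
    intro x hx
    have hx' : T.pair X (r : ℤ) x = 0 := DFunLike.ext _ _ fun ξ => by rw [hx ξ]; rfl
    rcases (T.uct_exact X (r : ℤ) x).mp hx' with ⟨z, hz⟩
    rw [← hz, T.uct_free X (r : ℤ) (free_int_transfer _ _ hfree) z]
  -- there is a homology class pairing non-trivially with `2 e(E)`
  obtain ⟨ξ, hξ⟩ : ∃ ξ, T.pair X (r : ℤ) (e.cls X V + e.cls X V) ξ ≠ 0 := by
    by_contra h
    push_neg at h
    apply he
    refine hβ _ fun ξ => ?_
    have h2 := h ξ
    simp only [map_add, LinearMap.add_apply] at h2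
    omega
  -- the singular set and the inclusion of its complement
  set A : Set X := singularSet V.toVB V.toVB L with hAdef
  have hA : IsClosed A := isClosed_singularSet V.toVB L hL
  set j : C(↥(Aᶜ), X) := ⟨Subtype.val, continuous_subtype_val⟩ with hj
  have hbij : ∀ y : ↥(Aᶜ), Function.Bijective (L (j y)) := fun y => not_not.mp y.2
  -- the pulled back bundle with its two orientations
  set W : VB ℝ ↥(Aᶜ) := V.toVB.pull j with hW
  have horiW : IsBundleOrientation r W (fun y => V.ori (j y)) :=
    isBundleOrientation_pull V.toVB j V.ori V.isOri
  set Wp : OVB ↥(Aᶜ) r := ⟨W, fun y => V.ori (j y), horiW⟩ with hWp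
  set Wm : OVB ↥(Aᶜ) r := ⟨W, fun y => -(V.ori (j y)),
    isBundleOrientation_neg W _ horiW⟩ with hWm
  set Vm : OVB X r := ⟨V.toVB, fun x => -(V.ori x),
    isBundleOrientation_neg V.toVB _ V.isOri⟩ with hVm
  have hVmcls : e.cls X Vm = -(e.cls X V) := hrev _
  -- `L` gives an orientation preserving isomorphism `Wp ≃ Wm` over the identity
  have h1 : e.cls _ Wp = T.cmap (ContinuousMap.id ↥(Aᶜ)) (r : ℤ) (e.cls _ Wm) := by
    refine e.natural _ _ Wp Wm (ContinuousMap.id ↥(Aᶜ))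
      (fun y => LinearEquiv.ofBijective ((L (j y) : V.E (j y) →ₗ[ℝ] V.E (j y))) (hbij y))
      ?_ ?_
    · refine (inducing_pullbackTotalSpaceEmbedding V.F V.E ⇑j).continuous_iff.mpr ?_
      exact (Pullback.continuous_proj V.F V.E ⇑j).prodMk
        (hL.comp (Pullback.continuous_lift V.F V.E ⇑j))
    · intro y
      exact hLrev (j y) (hbij y)
  -- the identity gives orientation preserving isomorphisms `Wp ≃ V` and `Wm ≃ Vm` over `j`
  have h2 : e.cls _ Wp = T.cmap j (r : ℤ) (e.cls X V) := by
    refine e.natural _ _ Wp V j (fun y => LinearEquiv.refl ℝ (V.E (j y))) ?_ ?_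
    · exact Pullback.continuous_lift V.F V.E ⇑j
    · intro y
      show (Orientation.map (Fin r) (LinearEquiv.refl ℝ (V.E (j y)))) (V.ori (j y)) = _
      rw [Orientation.map_refl]
      rfl
  have h3 : e.cls _ Wm = T.cmap j (r : ℤ) (e.cls X Vm) := by
    refine e.natural _ _ Wm Vm j (fun y => LinearEquiv.refl ℝ (V.E (j y))) ?_ ?_
    · exact Pullback.continuous_lift V.F V.E ⇑j
    · intro y
      show (Orientation.map (Fin r) (LinearEquiv.refl ℝ (V.E (j y)))) (-(V.ori (j y))) = _
      rw [Orientation.map_refl]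
      rfl
  -- the restriction of `2 e(E)` to the complement of the singular set vanishes
  have h4 : e.cls _ Wp = -(T.cmap j (r : ℤ) (e.cls X V)) := by
    rw [h1, T.cmap_id, h3, hVmcls, map_neg]
  have h5 : T.cmap j (r : ℤ) (e.cls X V) = -(T.cmap j (r : ℤ) (e.cls X V)) :=
    h2.symm.trans h4
  have hcmap0 : T.cmap j (r : ℤ) (e.cls X V + e.cls X V) = 0 := by
    rw [map_add]
    nth_rewrite 2 [h5]
    exact add_neg_cancel _
  -- hence `ξ` does not come from the complement, so `π_* ξ ≠ 0`
  have hπ : T.hmap (ContinuousMap.id X) (Set.mapsTo_empty _ _) (r : ℤ) ξ ≠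
      (0 : T.Hrel X Aᶜ (r : ℤ)) := by
    intro h0
    obtain ⟨ζ, hζ⟩ := (T.les_exact X A (r : ℤ) ξ).mp h0
    apply hξ
    have hp := T.pair_natural j (r : ℤ) (e.cls X V + e.cls X V) ζ
    rw [hcmap0] at hp
    simp only [map_zero, LinearMap.zero_apply] at hp
    rw [hζ] at hp
    exact hp.symm
  -- Poincaré–Lefschetz duality
  obtain ⟨pdX, pdA, hcomm⟩ := T.pd n X hor (r : ℤ) A hA
  have hne : T.ccmap (⟨Subtype.val, continuous_subtype_val⟩ : C(↥A, X)) ((n : ℤ) - (r : ℤ))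
      (pdX.symm ξ) ≠ 0 := by
    intro h0
    have hc := hcomm (pdX.symm ξ)
    rw [h0, map_zero, AddEquiv.apply_symm_apply] at hc
    exact hπ hc.symm
  -- conclude via Čech cohomology and covering dimension
  have : CompactSpace ↥A := isCompact_iff_compactSpace.mp hA.isCompact
  refine T.dim_cech ↥A (n - r) ?_
  rw [show (((n - r : ℕ) : ℕ) : ℤ) = (n : ℤ) - (r : ℤ) by omega]
  exact ⟨_, hne⟩

end
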